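/- Let α > 0. There is no voting rule f, defined on all preference profiles over nonempty subsets of a fixed three-element candidate set {a,b,c}, such that both: (i) f coincides with the majority rule on two-candidate profiles, i.e., whenever strictly more voters rank u above v in a profile over {u,v}, then f of that profile equals {u}; and (ii) f is independent of α-deletion clones. Equivalently, every voting rule satisfying (i) admits a profile P over {a,b,c} and a pair of α-deletion clones {x,y} in P for which the independence conditions fail for P_{-x}. -/

import Mathlib

open Finset

/-- A ranking (strict total order) of the candidate set `D ⊆ {a,b,c} = Fin 3`, encoded as a
duplicate-free list (best candidate first) whose set of elements is exactly `D`. -/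
def Ranking (D : Finset (Fin 3)) : Type := {l : List (Fin 3) // l.Nodup ∧ l.toFinset = D}

/-- The (0-indexed) position of candidate `x` in ranking `r`. -/
def rpos {D : Finset (Fin 3)} (r : Ranking D) (x : Fin 3) : ℕ := r.val.idxOf x

/-- Delete candidate `x` from a ranking. -/
def eraseCand {D : Finset (Fin 3)} (x : Fin 3) (r : Ranking D) : Ranking (D.erase x) :=
  ⟨r.val.erase x, r.2.1.erase x, by
    ext c
    simp [List.Nodup.mem_erase_iff r.2.1, Finset.mem_erase, ← r.2.2]⟩


-- aux
def rABC : Ranking ({0,1,2} : Finset (Fin 3)) := ⟨[0,1,2], by decide, by decide⟩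
def rCBA : Ranking ({0,1,2} : Finset (Fin 3)) := ⟨[2,1,0], by decide, by decide⟩
def rACB : Ranking ({0,1,2} : Finset (Fin 3)) := ⟨[0,2,1], by decide, by decide⟩

def prof (p : ℕ) (i : Fin (2*p+1)) : Ranking ({0,1,2} : Finset (Fin 3)) :=
  if i.1 < p then rABC else if i.1 < 2*p then rCBA else rACB

def castR {D D' : Finset (Fin 3)} (h : D = D') (r : Ranking D) : Ranking D' :=
  ⟨r.1, r.2.1, h ▸ r.2.2⟩

lemma f_cast (f : (D : Finset (Fin 3)) → (n : ℕ) → (Fin n → Ranking D) → Finset (Fin 3))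
    {D D' : Finset (Fin 3)} (h : D = D') (n : ℕ) (Q : Fin n → Ranking D) :
    f D n Q = f D' n (fun i => castR h (Q i)) := by subst h; rfl

lemma card_val {n : ℕ} (q : ℕ → Prop) [DecidablePred q] :
    (univ.filter (fun i : Fin n => q i.1)).card = ((range n).filter q).card := by
  rw [← Finset.card_image_of_injective (univ.filter fun i : Fin n => q i.1) Fin.val_injective]
  congr 1
  ext m
  simp only [mem_image, mem_filter, mem_univ, true_and, mem_range]
  constructor
  · rintro ⟨i, hq, rfl⟩; exact ⟨i.2, hq⟩
  · rintro ⟨hm, hq⟩; exact ⟨⟨m, hm⟩, hq, rfl⟩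

lemma count_eq {n : ℕ} {pred : Fin n → Prop} [DecidablePred pred] {q : ℕ → Prop}
    [DecidablePred q] (h : ∀ i, pred i ↔ q i.1) :
    (univ.filter pred).card = ((range n).filter q).card := by
  rw [Finset.filter_congr (fun i _ => h i)]
  exact card_val q

lemma cardR1 {p : ℕ} {pred : Fin (2*p+1) → Prop} [DecidablePred pred]
    (h : ∀ i, pred i ↔ i.1 < p) : (univ.filter pred).card = p := by
  rw [count_eq (q := fun m => m < p) h]
  have : (range (2*p+1)).filter (fun m => m < p) = Ico 0 p := by
    ext m; simp only [mem_filter, mem_range, mem_Ico]; omega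
  rw [this, Nat.card_Ico]; omega

lemma cardR1c {p : ℕ} {pred : Fin (2*p+1) → Prop} [DecidablePred pred]
    (h : ∀ i, pred i ↔ ¬ i.1 < p) : (univ.filter pred).card = p + 1 := by
  rw [count_eq (q := fun m => ¬ m < p) h]
  have : (range (2*p+1)).filter (fun m => ¬ m < p) = Ico p (2*p+1) := by
    ext m; simp only [mem_filter, mem_range, mem_Ico]; omega
  rw [this, Nat.card_Ico]; omega

lemma cardR2 {p : ℕ} {pred : Fin (2*p+1) → Prop} [DecidablePred pred]
    (h : ∀ i, pred i ↔ (p ≤ i.1 ∧ i.1 < 2*p)) : (univ.filter pred).card = p := by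
  rw [count_eq (q := fun m => p ≤ m ∧ m < 2*p) h]
  have : (range (2*p+1)).filter (fun m => p ≤ m ∧ m < 2*p) = Ico p (2*p) := by
    ext m; simp only [mem_filter, mem_range, mem_Ico]; omega
  rw [this, Nat.card_Ico]; omega

lemma cardR2c {p : ℕ} {pred : Fin (2*p+1) → Prop} [DecidablePred pred]
    (h : ∀ i, pred i ↔ ¬ (p ≤ i.1 ∧ i.1 < 2*p)) : (univ.filter pred).card = p + 1 := by
  rw [count_eq (q := fun m => ¬ (p ≤ m ∧ m < 2*p)) h]
  have : (range (2*p+1)).filter (fun m => ¬ (p ≤ m ∧ m < 2*p)) = Ico 0 p ∪ Ico (2*p) (2*p+1) := by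
    ext m; simp only [mem_filter, mem_range, mem_union, mem_Ico]; omega
  rw [this, Finset.card_union_of_disjoint, Nat.card_Ico, Nat.card_Ico]
  · omega
  · rw [Finset.disjoint_left]; intro m hm hm'; simp [mem_Ico] at hm hm'; omega

lemma cardR3 {p : ℕ} {pred : Fin (2*p+1) → Prop} [DecidablePred pred]
    (h : ∀ i, pred i ↔ 2*p ≤ i.1) : (univ.filter pred).card = 1 := by
  rw [count_eq (q := fun m => 2*p ≤ m) h]
  have : (range (2*p+1)).filter (fun m => 2*p ≤ m) = Ico (2*p) (2*p+1) := by
    ext m; simp only [mem_filter, mem_range, mem_Ico]; omega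
  rw [this, Nat.card_Ico]; omega

lemma card0 {n : ℕ} {pred : Fin n → Prop} [DecidablePred pred]
    (h : ∀ i, ¬ pred i) : (univ.filter pred).card = 0 := by
  rw [Finset.filter_false_of_mem (fun i _ => h i)]; simp

-- pointwise keys
lemma k_clone01 (p : ℕ) (i : Fin (2*p+1)) :
    (1 < ((rpos (prof p i) 0 : ℤ) - (rpos (prof p i) 1 : ℤ)).natAbs) ↔ 2*p ≤ i.1 := by
  have hi := i.isLt
  unfold prof
  split_ifs with h1 h2
  · exact iff_of_false (by decide) (by omega)
  · exact iff_of_false (by decide) (by omega)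
  · exact iff_of_true (by decide) (by omega)

lemma k_clone21 (p : ℕ) (i : Fin (2*p+1)) :
    ¬ (1 < ((rpos (prof p i) 2 : ℤ) - (rpos (prof p i) 1 : ℤ)).natAbs) := by
  unfold prof
  split_ifs <;> decide

lemma k_e0_lose (p : ℕ) (i : Fin (2*p+1)) :
    (rpos (eraseCand 0 (prof p i)) 1 < rpos (eraseCand 0 (prof p i)) 2) ↔ i.1 < p := by
  unfold prof
  split_ifs with h1 h2
  · exact iff_of_true (by decide) h1
  · exact iff_of_false (by decide) h1
  · exact iff_of_false (by decide) h1

lemma k_e0_win (p : ℕ) (i : Fin (2*p+1)) :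
    (rpos (eraseCand 0 (prof p i)) 2 < rpos (eraseCand 0 (prof p i)) 1) ↔ ¬ i.1 < p := by
  unfold prof
  split_ifs with h1 h2
  · exact iff_of_false (by decide) (by omega)
  · exact iff_of_true (by decide) (by omega)
  · exact iff_of_true (by decide) (by omega)

lemma k_e2_lose (p : ℕ) (i : Fin (2*p+1)) :
    (rpos (eraseCand 2 (prof p i)) 1 < rpos (eraseCand 2 (prof p i)) 0) ↔ (p ≤ i.1 ∧ i.1 < 2*p) := by
  unfold prof
  split_ifs with h1 h2
  · exact iff_of_false (by decide) (by omega)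
  · exact iff_of_true (by decide) (by omega)
  · exact iff_of_false (by decide) (by omega)

lemma k_e2_win (p : ℕ) (i : Fin (2*p+1)) :
    (rpos (eraseCand 2 (prof p i)) 0 < rpos (eraseCand 2 (prof p i)) 1) ↔ ¬ (p ≤ i.1 ∧ i.1 < 2*p) := by
  unfold prof
  split_ifs with h1 h2
  · exact iff_of_true (by decide) (by omega)
  · exact iff_of_false (by decide) (by omega)
  · exact iff_of_true (by decide) (by omega)

lemma rpos_castR {D D' : Finset (Fin 3)} (h : D = D') (r : Ranking D) (x : Fin 3) :
    rpos (castR h r) x = rpos r x := rfl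

/-- **Impossibility of independence of `α`-deletion clones (`α > 0`).**
There is no voting rule `f`, defined on all preference profiles over nonempty subsets of
the fixed three-element candidate set `Fin 3`, such that (i) `f` coincides with the
majority rule on two-candidate profiles and (ii) `f` is independent of `α`-deletion clones:
for every profile `P` with `n ≥ 1` voters and every pair `x ≠ y` of `α`-deletion clones in `P`,
(1) for all `z ∉ {x,y}`, `z ∈ f(P) ↔ z ∈ f(P₋ₓ)`, and
(2) `f(P) ∩ {x,y} ≠ ∅ ↔ y ∈ f(P₋ₓ)`. -/
theorem no_rule_indep_deletion_clones (α : ℝ) (hα : 0 < α) :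
    ¬ ∃ f : (D : Finset (Fin 3)) → (n : ℕ) → (Fin n → Ranking D) → Finset (Fin 3),
      -- `f` is a voting rule: winners form a nonempty subset of the candidate set
      (∀ (D : Finset (Fin 3)) (n : ℕ) (P : Fin n → Ranking D),
        D.Nonempty → 1 ≤ n → (f D n P).Nonempty ∧ f D n P ⊆ D) ∧
      -- (i) majority rule on two-candidate profiles
      (∀ (u v : Fin 3), u ≠ v → ∀ (n : ℕ) (P : Fin n → Ranking {u, v}),
        (univ.filter fun i => rpos (P i) v < rpos (P i) u).card <
          (univ.filter fun i => rpos (P i) u < rpos (P i) v).card →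
        f {u, v} n P = {u}) ∧
      -- (ii) independence of `α`-deletion clones
      (∀ (D : Finset (Fin 3)) (n : ℕ), 1 ≤ n → ∀ (P : Fin n → Ranking D) (x y : Fin 3),
        x ∈ D → y ∈ D → x ≠ y →
        ((univ.filter fun i =>
            1 < ((rpos (P i) x : ℤ) - (rpos (P i) y : ℤ)).natAbs).card : ℝ) / n ≤ α →
        (∀ z : Fin 3, z ≠ x → z ≠ y →
          (z ∈ f D n P ↔ z ∈ f (D.erase x) n (fun i => eraseCand x (P i)))) ∧
        ((f D n P ∩ {x, y}).Nonempty ↔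
          y ∈ f (D.erase x) n (fun i => eraseCand x (P i)))) := by
  rintro ⟨f, hTot, hMaj, hCl⟩
  set p : ℕ := ⌈α⁻¹⌉₊ with hpdef
  set n : ℕ := 2*p+1 with hndef
  have hn1 : 1 ≤ n := by omega
  have hαn : α⁻¹ ≤ (n : ℝ) := by
    have h1 : α⁻¹ ≤ (p : ℝ) := Nat.le_ceil α⁻¹
    have h2 : (p : ℝ) ≤ (n : ℝ) := by exact_mod_cast Nat.le_of_lt (by omega)
    linarith
  have hnpos : (0:ℝ) < (n : ℝ) := by positivity
  have hfrac : (1:ℝ) / (n : ℝ) ≤ α := by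
    rw [div_le_iff₀ hnpos]
    calc (1:ℝ) = α * α⁻¹ := (mul_inv_cancel₀ hα.ne').symm
      _ ≤ α * (n : ℝ) := mul_le_mul_of_nonneg_left hαn hα.le
  set P : Fin n → Ranking ({0,1,2} : Finset (Fin 3)) := prof p with hPdef
  -- clone pair (0,1)
  have hb01 : ((univ.filter fun i =>
      1 < ((rpos (P i) 0 : ℤ) - (rpos (P i) 1 : ℤ)).natAbs).card : ℝ) / n ≤ α := by
    rw [cardR3 (k_clone01 p)]
    exact_mod_cast hfrac
  obtain ⟨h1z, h1xy⟩ := hCl {0,1,2} n hn1 P 0 1 (by decide) (by decide) (by decide) hb01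
  -- clone pair (2,1)
  have hb21 : ((univ.filter fun i =>
      1 < ((rpos (P i) 2 : ℤ) - (rpos (P i) 1 : ℤ)).natAbs).card : ℝ) / n ≤ α := by
    rw [card0 (k_clone21 p)]
    simpa using le_of_lt (by positivity : (0:ℝ) < α)
  obtain ⟨h2z, _⟩ := hCl {0,1,2} n hn1 P 2 1 (by decide) (by decide) (by decide) hb21
  -- f on the 2-candidate profile obtained by deleting 0 equals {2}
  have hD0 : (({0,1,2} : Finset (Fin 3)).erase 0) = ({2,1} : Finset (Fin 3)) := by decide
  have e0 : f (({0,1,2} : Finset (Fin 3)).erase 0) n (fun i => eraseCand 0 (P i))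
      = ({2} : Finset (Fin 3)) := by
    rw [f_cast f hD0 n (fun i => eraseCand 0 (P i))]
    apply hMaj 2 1 (by decide) n
    rw [cardR1 (p := p) (pred := fun i =>
        rpos (castR hD0 (eraseCand 0 (P i))) 1 < rpos (castR hD0 (eraseCand 0 (P i))) 2)
        (k_e0_lose p),
      cardR1c (p := p) (pred := fun i =>
        rpos (castR hD0 (eraseCand 0 (P i))) 2 < rpos (castR hD0 (eraseCand 0 (P i))) 1)
        (k_e0_win p)]
    omega
  -- f on the 2-candidate profile obtained by deleting 2 equals {0}
  have hD2 : (({0,1,2} : Finset (Fin 3)).erase 2) = ({0,1} : Finset (Fin 3)) := by decide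
  have e2 : f (({0,1,2} : Finset (Fin 3)).erase 2) n (fun i => eraseCand 2 (P i))
      = ({0} : Finset (Fin 3)) := by
    rw [f_cast f hD2 n (fun i => eraseCand 2 (P i))]
    apply hMaj 0 1 (by decide) n
    rw [cardR2 (p := p) (pred := fun i =>
        rpos (castR hD2 (eraseCand 2 (P i))) 1 < rpos (castR hD2 (eraseCand 2 (P i))) 0)
        (k_e2_lose p),
      cardR2c (p := p) (pred := fun i =>
        rpos (castR hD2 (eraseCand 2 (P i))) 0 < rpos (castR hD2 (eraseCand 2 (P i))) 1)
        (k_e2_win p)]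
    omega
  -- deduce: 0 ∈ W but W ∩ {0,1} = ∅
  have h0W : (0 : Fin 3) ∈ f {0,1,2} n P := by
    rw [h2z 0 (by decide) (by decide), e2]
    decide
  have hno : ¬ (f {0,1,2} n P ∩ ({0,1} : Finset (Fin 3))).Nonempty := by
    rw [h1xy, e0]
    decide
  exact hno ⟨0, Finset.mem_inter.mpr ⟨h0W, by decide⟩⟩
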